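/- Let x : ℝ → ℝ² be twice continuously differentiable in a neighborhood of t₀, with components x = (x₁, x₂), and assume x'(t₀) ≠ 0. Then, as τ tends to t₀ with τ ≠ t₀, the quotient (x₂'(τ)·(x₁(t₀) − x₁(τ)) − x₁'(τ)·(x₂(t₀) − x₂(τ))) / ‖x(t₀) − x(τ)‖² tends to the limit (x₂'(t₀)·x₁''(t₀) − x₁'(t₀)·x₂''(t₀)) / (2‖x'(t₀)‖²). -/

import Mathlib

open Filter Topology

theorem double_layer_kernel_diagonal_limit
    (x₁ x₂ : ℝ → ℝ) (t₀ : ℝ)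
    (hx : ∃ u ∈ 𝓝 t₀, ContDiffOn ℝ 2 x₁ u ∧ ContDiffOn ℝ 2 x₂ u)
    (hx' : (deriv x₁ t₀, deriv x₂ t₀) ≠ (0, 0)) :
    Tendsto
      (fun τ : ℝ =>
        (deriv x₂ τ * (x₁ t₀ - x₁ τ) - deriv x₁ τ * (x₂ t₀ - x₂ τ)) /
          ((x₁ t₀ - x₁ τ)^2 + (x₂ t₀ - x₂ τ)^2))
      (𝓝[≠] t₀)
      (𝓝 ((deriv x₂ t₀ * deriv (deriv x₁) t₀ - deriv x₁ t₀ * deriv (deriv x₂) t₀) /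
        (2 * ((deriv x₁ t₀)^2 + (deriv x₂ t₀)^2)))) := by
  obtain ⟨u, hu, h1, h2⟩ := hx
  set s := interior u with hsdef
  have hso : IsOpen s := isOpen_interior
  have hts : t₀ ∈ s := mem_interior_iff_mem_nhds.mpr hu
  have h1s : ContDiffOn ℝ 2 x₁ s := h1.mono interior_subset
  have h2s : ContDiffOn ℝ 2 x₂ s := h2.mono interior_subset
  -- first derivatives
  have hd1 : ∀ τ ∈ s, HasDerivAt x₁ (deriv x₁ τ) τ := fun τ hτ =>
    ((h1s.differentiableOn (by norm_num)).differentiableAt (hso.mem_nhds hτ)).hasDerivAt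
  have hd2 : ∀ τ ∈ s, HasDerivAt x₂ (deriv x₂ τ) τ := fun τ hτ =>
    ((h2s.differentiableOn (by norm_num)).differentiableAt (hso.mem_nhds hτ)).hasDerivAt
  -- deriv is C¹ on s
  have hc1 : ContDiffOn ℝ 1 (deriv x₁) s := h1s.deriv_of_isOpen hso (by norm_num)
  have hc2 : ContDiffOn ℝ 1 (deriv x₂) s := h2s.deriv_of_isOpen hso (by norm_num)
  -- second derivatives
  have hd1' : ∀ τ ∈ s, HasDerivAt (deriv x₁) (deriv (deriv x₁) τ) τ := fun τ hτ =>
    ((hc1.differentiableOn (by norm_num)).differentiableAt (hso.mem_nhds hτ)).hasDerivAt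
  have hd2' : ∀ τ ∈ s, HasDerivAt (deriv x₂) (deriv (deriv x₂) τ) τ := fun τ hτ =>
    ((hc2.differentiableOn (by norm_num)).differentiableAt (hso.mem_nhds hτ)).hasDerivAt
  -- continuity of first and second derivatives at t₀
  have hcd1 : ContinuousAt (deriv x₁) t₀ :=
    (hc1.continuousOn.continuousAt (hso.mem_nhds hts))
  have hcd2 : ContinuousAt (deriv x₂) t₀ :=
    (hc2.continuousOn.continuousAt (hso.mem_nhds hts))
  have hcdd1 : ContinuousAt (deriv (deriv x₁)) t₀ :=
    (hc1.continuousOn_deriv_of_isOpen hso le_rfl).continuousAt (hso.mem_nhds hts)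
  have hcdd2 : ContinuousAt (deriv (deriv x₂)) t₀ :=
    (hc2.continuousOn_deriv_of_isOpen hso le_rfl).continuousAt (hso.mem_nhds hts)
  have hcx1 : ContinuousAt x₁ t₀ := (hd1 t₀ hts).continuousAt
  have hcx2 : ContinuousAt x₂ t₀ := (hd2 t₀ hts).continuousAt
  -- slope limits
  have hslope1 : Tendsto (fun τ => (x₁ t₀ - x₁ τ) / (t₀ - τ)) (𝓝[≠] t₀) (𝓝 (deriv x₁ t₀)) := by
    have h := hasDerivAt_iff_tendsto_slope.mp (hd1 t₀ hts)
    refine h.congr fun τ => ?_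
    rw [slope_def_field, show x₁ t₀ - x₁ τ = -(x₁ τ - x₁ t₀) by ring,
      show t₀ - τ = -(τ - t₀) by ring, neg_div_neg_eq]
  have hslope2 : Tendsto (fun τ => (x₂ t₀ - x₂ τ) / (t₀ - τ)) (𝓝[≠] t₀) (𝓝 (deriv x₂ t₀)) := by
    have h := hasDerivAt_iff_tendsto_slope.mp (hd2 t₀ hts)
    refine h.congr fun τ => ?_
    rw [slope_def_field, show x₂ t₀ - x₂ τ = -(x₂ τ - x₂ t₀) by ring,
      show t₀ - τ = -(τ - t₀) by ring, neg_div_neg_eq]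
  have hsmem : s ∈ 𝓝[≠] t₀ := nhdsWithin_le_nhds (hso.mem_nhds hts)
  have hne : ∀ᶠ τ in 𝓝[≠] t₀, τ ≠ t₀ := eventually_mem_nhdsWithin
  -- numerator limit via L'Hôpital
  have hnum : Tendsto
      (fun τ => (deriv x₂ τ * (x₁ t₀ - x₁ τ) - deriv x₁ τ * (x₂ t₀ - x₂ τ)) / (t₀ - τ) ^ 2)
      (𝓝[≠] t₀)
      (𝓝 ((deriv x₂ t₀ * deriv (deriv x₁) t₀ - deriv x₁ t₀ * deriv (deriv x₂) t₀) / 2)) := by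
    apply HasDerivAt.lhopital_zero_nhdsNE
      (f' := fun τ => deriv (deriv x₂) τ * (x₁ t₀ - x₁ τ) - deriv (deriv x₁) τ * (x₂ t₀ - x₂ τ))
      (g' := fun τ => -(2 * (t₀ - τ)))
    · filter_upwards [hsmem] with τ hτ
      have h := ((hd2' τ hτ).mul ((hasDerivAt_const τ (x₁ t₀)).sub (hd1 τ hτ))).sub
        ((hd1' τ hτ).mul ((hasDerivAt_const τ (x₂ t₀)).sub (hd2 τ hτ)))
      exact h.congr_deriv (by simp only [Pi.sub_apply]; ring)
    · filter_upwards with τ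
      have h : HasDerivAt (fun τ : ℝ => (t₀ - τ) ^ 2) (2 * (t₀ - τ) ^ 1 * (0 - 1)) τ :=
        (((hasDerivAt_const τ t₀).sub (hasDerivAt_id τ)).pow 2)
      convert h using 1
      ring
    · filter_upwards [hne] with τ hτ
      have : t₀ - τ ≠ 0 := sub_ne_zero.mpr (Ne.symm hτ)
      simp only [neg_ne_zero]
      positivity
    · apply tendsto_nhdsWithin_of_tendsto_nhds
      have : ContinuousAt (fun τ => deriv x₂ τ * (x₁ t₀ - x₁ τ) - deriv x₁ τ * (x₂ t₀ - x₂ τ)) t₀ :=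
        (hcd2.mul (continuousAt_const.sub hcx1)).sub (hcd1.mul (continuousAt_const.sub hcx2))
      have h0 := this.tendsto
      simpa using h0
    · apply tendsto_nhdsWithin_of_tendsto_nhds
      have : ContinuousAt (fun τ : ℝ => (t₀ - τ) ^ 2) t₀ := by fun_prop
      have h0 := this.tendsto
      simpa using h0
    · have hT : Tendsto
          (fun τ => (-(1/2 : ℝ)) * (deriv (deriv x₂) τ * ((x₁ t₀ - x₁ τ) / (t₀ - τ))
            - deriv (deriv x₁) τ * ((x₂ t₀ - x₂ τ) / (t₀ - τ)))) (𝓝[≠] t₀)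
          (𝓝 ((-(1/2 : ℝ)) * (deriv (deriv x₂) t₀ * deriv x₁ t₀
            - deriv (deriv x₁) t₀ * deriv x₂ t₀))) := by
        apply Tendsto.const_mul
        exact (((hcdd2.tendsto.mono_left nhdsWithin_le_nhds).mul hslope1).sub
          ((hcdd1.tendsto.mono_left nhdsWithin_le_nhds).mul hslope2))
      have heq : (deriv x₂ t₀ * deriv (deriv x₁) t₀ - deriv x₁ t₀ * deriv (deriv x₂) t₀) / 2
          = (-(1/2 : ℝ)) * (deriv (deriv x₂) t₀ * deriv x₁ t₀
            - deriv (deriv x₁) t₀ * deriv x₂ t₀) := by ring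
      rw [heq]
      refine hT.congr' ?_
      filter_upwards [hne] with τ hτ
      have h0 : t₀ - τ ≠ 0 := sub_ne_zero.mpr (Ne.symm hτ)
      field_simp
  -- denominator limit
  have hden : Tendsto
      (fun τ => ((x₁ t₀ - x₁ τ) ^ 2 + (x₂ t₀ - x₂ τ) ^ 2) / (t₀ - τ) ^ 2)
      (𝓝[≠] t₀) (𝓝 ((deriv x₁ t₀) ^ 2 + (deriv x₂ t₀) ^ 2)) := by
    have hT := (hslope1.mul hslope1).add (hslope2.mul hslope2)
    have heq : (deriv x₁ t₀) ^ 2 + (deriv x₂ t₀) ^ 2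
        = deriv x₁ t₀ * deriv x₁ t₀ + deriv x₂ t₀ * deriv x₂ t₀ := by ring
    rw [heq]
    refine hT.congr' ?_
    filter_upwards [hne] with τ hτ
    have h0 : t₀ - τ ≠ 0 := sub_ne_zero.mpr (Ne.symm hτ)
    field_simp
  have hdne : (deriv x₁ t₀) ^ 2 + (deriv x₂ t₀) ^ 2 ≠ 0 := by
    have : deriv x₁ t₀ ≠ 0 ∨ deriv x₂ t₀ ≠ 0 := by
      by_contra h
      push_neg at h
      exact hx' (by simp [h.1, h.2])
    rcases this with h | h
    · positivity
    · positivity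
  have hfin := hnum.div hden hdne
  rw [div_div] at hfin
  refine hfin.congr' ?_
  filter_upwards [hne] with τ hτ
  have h0 : (t₀ - τ) ^ 2 ≠ 0 := pow_ne_zero _ (sub_ne_zero.mpr (Ne.symm hτ))
  simp only [Pi.div_apply]
  by_cases hb : (x₁ t₀ - x₁ τ) ^ 2 + (x₂ t₀ - x₂ τ) ^ 2 = 0
  · simp [hb]
  · field_simp
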